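/- Let G be a graph, T a tree subgraph of G on m vertices, and suppose that every partition (W₁,W₂) of V(T) with |W₁|,|W₂| ≥ m/3 has at least cn edges of G between W₁ and W₂ (i.e., the bisection width of H = G[V(T)] is at least cn). Suppose further that X ⊆ V(G) is a set of vertices such that the number of edges of G incident to X is at most cn/2, and every vertex of V(G) \ X has degree at most M in G. Then the rank-width of G is at least cn/(2M²). -/

import Mathlib

open scoped Classical

/-- The cut-rank of a vertex set `A` in `G`: the `F₂`-rank of the bipartite adjacency
matrix between `A` and its complement. -/
noncomputable def cutRank {V : Type} [Fintype V] (G : SimpleGraph V) (A : Set V) : ℕ :=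
  Matrix.rank (fun (u : A) (v : ↥(Aᶜ)) => if G.Adj u.1 v.1 then (1 : ZMod 2) else 0)

/-- `G` has a rank-decomposition of width at most `k`: a subcubic tree `t` (all degrees
`1` or `3`) whose leaves are in bijection with `V(G)` via `f`, such that every edge `xy`
of `t` induces a bipartition of `V(G)` of cut-rank at most `k`. -/
def HasRankwidthAtMost {V : Type} [Fintype V] (G : SimpleGraph V) (k : ℕ) : Prop :=
  ∃ (B : Type) (_ : Fintype B) (t : SimpleGraph B) (_ : t.IsTree),
    (∀ b : B, t.degree b = 1 ∨ t.degree b = 3) ∧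
    ∃ f : V ≃ {b : B // t.degree b = 1},
      ∀ x y : B, t.Adj x y →
        cutRank G {v : V | (t.deleteEdges {s(x, y)}).Reachable (↑(f v)) x} ≤ k



open Finset Matrix

lemma card_filter_subtype {α : Type} (R : Finset α) (P : α → Prop)
    [DecidablePred P] [DecidablePred (fun i : ↥R => P i.1)] :
    (Finset.univ.filter fun i : ↥R => P i.1).card = (R.filter P).card := by
  apply Finset.card_bij (fun (i : ↥R) _ => i.1)
  · intro a ha
    exact mem_filter.mpr ⟨a.2, (mem_filter.mp ha).2⟩
  · intro a _ b _ h
    exact Subtype.ext h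
  · intro a ha
    exact ⟨⟨a, (mem_filter.mp ha).1⟩, mem_filter.mpr ⟨mem_univ _, (mem_filter.mp ha).2⟩, rfl⟩

lemma col_mem_span_support {F : Type} [Field F] {ι : Type} (b : Set (ι → F))
    (x : ι → F) (hx : x ∈ Submodule.span F b) (i : ι) (hxi : x i ≠ 0) :
    ∃ v ∈ b, v i ≠ 0 := by
  rcases Submodule.mem_span_set.mp hx with ⟨c, hc, rfl⟩
  by_contra h
  push_neg at h
  apply hxi
  simp only [Finsupp.sum, Finset.sum_apply]
  apply Finset.sum_eq_zero
  intro v hv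
  have hvi : v i = 0 := h v (hc hv)
  simp [hvi]

lemma nonzero_count_le_rank_mul_sq {m n : Type} [Fintype m] [Fintype n]
    (A : Matrix m n (ZMod 2)) (R : Finset m) (C : Finset n) (M : ℕ)
    (hrow : ∀ i ∈ R, ((C.filter fun j => A i j ≠ 0)).card ≤ M)
    (hcol : ∀ j ∈ C, ((R.filter fun i => A i j ≠ 0)).card ≤ M) :
    ((R ×ˢ C).filter fun p => A p.1 p.2 ≠ 0).card ≤ A.rank * M ^ 2 := by
  set cvec : ↥C → (↥R → (ZMod 2)) := fun j i => A i.1 j.1 with hcvec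
  -- the span of the restricted columns has finrank at most the rank of A
  have hrank : Module.finrank (ZMod 2) ↥(Submodule.span (ZMod 2) (Set.range cvec)) ≤ A.rank := by
    have hsub : Set.range cvec ⊆
        ↑(Submodule.map (LinearMap.funLeft (ZMod 2) (ZMod 2) (Subtype.val : ↥R → m))
          (Submodule.span (ZMod 2) (Set.range Aᵀ))) := by
      rintro _ ⟨j, rfl⟩
      exact ⟨Aᵀ j.1, Submodule.subset_span ⟨j.1, rfl⟩, rfl⟩
    have hle : Submodule.span (ZMod 2) (Set.range cvec) ≤
        Submodule.map (LinearMap.funLeft (ZMod 2) (ZMod 2) (Subtype.val : ↥R → m))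
          (Submodule.span (ZMod 2) (Set.range Aᵀ)) := Submodule.span_le.mpr hsub
    calc Module.finrank (ZMod 2) ↥(Submodule.span (ZMod 2) (Set.range cvec))
        ≤ Module.finrank (ZMod 2) ↥(Submodule.map (LinearMap.funLeft (ZMod 2) (ZMod 2) (Subtype.val : ↥R → m))
            (Submodule.span (ZMod 2) (Set.range Aᵀ))) := Submodule.finrank_mono hle
      _ ≤ Module.finrank (ZMod 2) ↥(Submodule.span (ZMod 2) (Set.range Aᵀ)) := Submodule.finrank_map_le _ _
      _ = A.rank := (Matrix.rank_eq_finrank_span_cols A).symm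
  obtain ⟨b, hbsub, hbspan, hbind⟩ := exists_linearIndependent (ZMod 2) (Set.range cvec)
  have hbfin : b.Finite := (Set.finite_range cvec).subset hbsub
  haveI : Fintype ↥b := hbfin.fintype
  have hcardb : b.toFinset.card ≤ A.rank := by
    rw [← finrank_span_set_eq_card hbind, hbspan]
    exact hrank
  set U : Finset ↥R := Finset.univ.filter (fun i : ↥R => ∃ v ∈ b, v i ≠ 0) with hU
  have hUcard : U.card ≤ A.rank * M := by
    have hsub : U ⊆ b.toFinset.biUnion (fun v => Finset.univ.filter fun i => v i ≠ 0) := by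
      intro i hi
      obtain ⟨-, v, hv, hvi⟩ := mem_filter.mp hi
      exact mem_biUnion.mpr ⟨v, Set.mem_toFinset.mpr hv, mem_filter.mpr ⟨mem_univ _, hvi⟩⟩
    calc U.card ≤ (b.toFinset.biUnion (fun v => Finset.univ.filter fun i => v i ≠ 0)).card :=
          card_le_card hsub
      _ ≤ ∑ v ∈ b.toFinset, (Finset.univ.filter fun i : ↥R => v i ≠ 0).card := card_biUnion_le
      _ ≤ ∑ _v ∈ b.toFinset, M := by
          apply Finset.sum_le_sum
          intro v hv
          obtain ⟨j, rfl⟩ := hbsub (Set.mem_toFinset.mp hv)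
          exact le_trans (le_of_eq (card_filter_subtype R (fun i => A i j.1 ≠ 0)))
            (hcol j.1 j.2)
      _ = b.toFinset.card * M := by rw [Finset.sum_const, smul_eq_mul]
      _ ≤ A.rank * M := Nat.mul_le_mul_right _ hcardb
  have hsub2 : ((R ×ˢ C).filter fun p => A p.1 p.2 ≠ 0) ⊆
      (U.image Subtype.val).biUnion
        (fun i => (C.filter fun j => A i j ≠ 0).image fun j => (i, j)) := by
    intro p hp
    obtain ⟨hmem, hpA⟩ := mem_filter.mp hp
    obtain ⟨hp1, hp2⟩ := mem_product.mp hmem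
    have hx : cvec ⟨p.2, hp2⟩ ∈ Submodule.span (ZMod 2) b := by
      rw [hbspan]
      exact Submodule.subset_span ⟨_, rfl⟩
    obtain ⟨v, hv, hvi⟩ := col_mem_span_support b _ hx ⟨p.1, hp1⟩ hpA
    have hiU : (⟨p.1, hp1⟩ : ↥R) ∈ U := mem_filter.mpr ⟨mem_univ _, v, hv, hvi⟩
    refine mem_biUnion.mpr ⟨p.1, mem_image.mpr ⟨_, hiU, rfl⟩, ?_⟩
    exact mem_image.mpr ⟨p.2, mem_filter.mpr ⟨hp2, hpA⟩, by simp⟩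
  calc ((R ×ˢ C).filter fun p => A p.1 p.2 ≠ 0).card
      ≤ ((U.image Subtype.val).biUnion
          (fun i => (C.filter fun j => A i j ≠ 0).image fun j => (i, j))).card :=
        card_le_card hsub2
    _ ≤ ∑ i ∈ U.image Subtype.val, ((C.filter fun j => A i j ≠ 0).image fun j => (i, j)).card :=
        card_biUnion_le
    _ ≤ ∑ i ∈ U.image Subtype.val, M := by
        apply Finset.sum_le_sum
        intro i hi
        obtain ⟨i', hi', rfl⟩ := mem_image.mp hi
        exact (card_image_le).trans (hrow i'.1 i'.2)
    _ = (U.image Subtype.val).card * M := by rw [Finset.sum_const, smul_eq_mul]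
    _ ≤ U.card * M := Nat.mul_le_mul_right _ card_image_le
    _ ≤ A.rank * M * M := Nat.mul_le_mul_right _ hUcard
    _ = A.rank * M ^ 2 := by ring


open Finset SimpleGraph

variable {B : Type} {t : SimpleGraph B}

lemma treeBridge (ht : t.IsAcyclic) {x y : B} (hxy : t.Adj x y) :
    ¬ (t.deleteEdges {s(x, y)}).Reachable x y := by
  have h := (isAcyclic_iff_forall_adj_isBridge.mp ht) hxy
  rw [isBridge_iff] at h
  exact h

lemma reach_or_of_walk {x y : B} :
    ∀ {a : B}, t.Walk a x →
      (t.deleteEdges {s(x, y)}).Reachable a x ∨ (t.deleteEdges {s(x, y)}).Reachable a y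
  | _, SimpleGraph.Walk.nil => Or.inl (Reachable.refl _)
  | a, @SimpleGraph.Walk.cons _ _ _ b _ h p => by
    rcases reach_or_of_walk (y := y) p with hx | hy
    · by_cases he : s(a, b) = s(x, y)
      · rcases Sym2.eq_iff.mp he with ⟨rfl, rfl⟩ | ⟨rfl, rfl⟩
        · exact Or.inl (Reachable.refl _)
        · exact Or.inr (Reachable.refl _)
      · exact Or.inl ((Adj.reachable (by simp [h, he])).trans hx)
    · by_cases he : s(a, b) = s(x, y)
      · rcases Sym2.eq_iff.mp he with ⟨rfl, rfl⟩ | ⟨rfl, rfl⟩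
        · exact Or.inl (Reachable.refl _)
        · exact Or.inr (Reachable.refl _)
      · exact Or.inr ((Adj.reachable (by simp [h, he])).trans hy)

lemma reach_or (ht : t.Connected) {x y : B} (a : B) :
    (t.deleteEdges {s(x, y)}).Reachable a x ∨ (t.deleteEdges {s(x, y)}).Reachable a y := by
  obtain ⟨w⟩ := ht.preconnected a x
  exact reach_or_of_walk w

lemma not_both (ht : t.IsAcyclic) {x y : B} (hxy : t.Adj x y) {a : B}
    (h1 : (t.deleteEdges {s(x, y)}).Reachable a x)
    (h2 : (t.deleteEdges {s(x, y)}).Reachable a y) : False :=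
  treeBridge ht hxy (h1.symm.trans h2)

lemma step_off {x y : B} (hxy : t.Adj x y) {a : B}
    (hax : (t.deleteEdges {s(x, y)}).Reachable a x) (hne : a ≠ x) :
    ∃ z, t.Adj x z ∧ z ≠ y ∧ (t.deleteEdges {s(x, z)}).Reachable a z := by
  obtain ⟨w⟩ := hax
  obtain ⟨q, hq⟩ : ∃ q : (t.deleteEdges {s(x, y)}).Walk x a, q.IsPath :=
    ⟨w.toPath.1.reverse, w.toPath.2.reverse⟩
  cases q with
  | nil => exact absurd rfl hne.symm
  | @cons _ z _ h q' =>
    obtain ⟨hq', hxs⟩ := (SimpleGraph.Walk.cons_isPath_iff _ _).mp hq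
    rw [SimpleGraph.deleteEdges_adj] at h
    obtain ⟨h1, h2⟩ := h
    have hzy : z ≠ y := by
      rintro rfl
      exact h2 rfl
    refine ⟨z, h1, hzy, ?_⟩
    have hcond : ∀ e ∈ q'.edges, e ∈ (t.deleteEdges {s(x, z)}).edgeSet := by
      intro e he
      rw [SimpleGraph.edgeSet_deleteEdges]
      refine ⟨?_, ?_⟩
      · have := q'.edges_subset_edgeSet he
        rw [SimpleGraph.edgeSet_deleteEdges] at this
        exact this.1
      · intro hmem
        rw [Set.mem_singleton_iff] at hmem
        subst hmem
        exact hxs (q'.fst_mem_support_of_mem_edges he)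
    exact ⟨(q'.transfer (t.deleteEdges {s(x, z)}) hcond).reverse⟩

lemma side_mono (ht : t.IsAcyclic) {x y z : B} (hxy : t.Adj x y) (hxz : t.Adj x z)
    (hzy : z ≠ y) {a : B} (haz : (t.deleteEdges {s(x, z)}).Reachable a z) :
    (t.deleteEdges {s(x, y)}).Reachable a x ∧ a ≠ x := by
  have hbr : ¬ (t.deleteEdges {s(x, z)}).Reachable x z := treeBridge ht hxz
  have hax : a ≠ x := by rintro rfl; exact hbr haz
  obtain ⟨w⟩ := haz
  obtain ⟨q, hq⟩ : ∃ q : (t.deleteEdges {s(x, z)}).Walk a z, q.IsPath :=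
    ⟨w.toPath.1, w.toPath.2⟩
  have hxs : x ∉ q.support := fun hx => hbr ⟨q.dropUntil x hx⟩
  have hcond : ∀ e ∈ q.edges, e ∈ (t.deleteEdges {s(x, y)}).edgeSet := by
    intro e he
    rw [SimpleGraph.edgeSet_deleteEdges]
    refine ⟨?_, ?_⟩
    · have := q.edges_subset_edgeSet he
      rw [SimpleGraph.edgeSet_deleteEdges] at this
      exact this.1
    · intro hmem
      rw [Set.mem_singleton_iff] at hmem
      subst hmem
      exact hxs (q.fst_mem_support_of_mem_edges he)
  have hzx : (t.deleteEdges {s(x, y)}).Adj z x := by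
    rw [SimpleGraph.deleteEdges_adj]
    refine ⟨hxz.symm, ?_⟩
    intro hmem
    rw [Set.mem_singleton_iff] at hmem
    rcases Sym2.eq_iff.mp hmem with ⟨rfl, rfl⟩ | ⟨rfl, -⟩
    · exact hxy.ne rfl
    · exact hzy rfl
  exact ⟨Reachable.trans ⟨q.transfer (t.deleteEdges {s(x, y)}) hcond⟩ hzx.reachable, hax⟩

lemma deg_one_side [Fintype B] {x y : B} (hxy : t.Adj x y) (hdeg : t.degree x = 1) {a : B}
    (h : (t.deleteEdges {s(x, y)}).Reachable a x) : a = x := by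
  by_contra hne
  obtain ⟨z, hadj, hzy, -⟩ := step_off hxy h hne
  apply hzy
  have h1 : z ∈ t.neighborFinset x := (SimpleGraph.mem_neighborFinset _ _ _).mpr hadj
  have h2 : y ∈ t.neighborFinset x := (SimpleGraph.mem_neighborFinset _ _ _).mpr hxy
  exact Finset.card_le_one.mp (le_of_eq hdeg) _ h1 _ h2
lemma exists_balanced_edge {B V : Type} [Fintype B] [Fintype V] (t : SimpleGraph B)
    (ht : t.IsTree) (hdeg13 : ∀ b : B, t.degree b = 1 ∨ t.degree b = 3)
    (f : V ≃ {b : B // t.degree b = 1}) (W : Finset V) (m : ℕ) (hWm : W.card = m)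
    (hm : 2 ≤ m) :
    ∃ x y : B, t.Adj x y ∧
      m ≤ 3 * (W.filter fun v => (t.deleteEdges {s(x, y)}).Reachable (↑(f v)) x).card ∧
      m ≤ 3 * (W.filter fun v => (t.deleteEdges {s(x, y)}).Reachable (↑(f v)) y).card := by
  set g : B → B → ℕ :=
    fun x y => (W.filter fun v => (t.deleteEdges {s(x, y)}).Reachable (↑(f v)) x).card with hg
  set bc : B → B → ℕ :=
    fun x y => (Finset.univ.filter
      fun b : B => (t.deleteEdges {s(x, y)}).Reachable b x).card with hbc
  have hswap : ∀ x y : B, g y x =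
      (W.filter fun v => (t.deleteEdges {s(x, y)}).Reachable (↑(f v)) y).card := by
    intro x y
    simp only [hg]
    rw [Sym2.eq_swap]
  have hsum : ∀ x y : B, t.Adj x y → g x y + g y x = m := by
    intro x y hxy
    rw [hswap x y]
    have hfil : (W.filter fun v => (t.deleteEdges {s(x, y)}).Reachable (↑(f v)) y)
        = (W.filter fun v => ¬ (t.deleteEdges {s(x, y)}).Reachable (↑(f v)) x) := by
      apply Finset.filter_congr
      intro v _
      constructor
      · intro h2 h1
        exact not_both ht.IsAcyclic hxy h1 h2
      · intro h1
        rcases reach_or (t := t) ht.isConnected (x := x) (y := y) (↑(f v) : B) with h | h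
        · exact absurd h h1
        · exact h
    simp only [hg]
    rw [hfil, Finset.card_filter_add_card_filter_not, hWm]
  set Q : Finset (B × B) :=
    Finset.univ.filter (fun p : B × B => t.Adj p.1 p.2 ∧ m ≤ 3 * g p.1 p.2) with hQ
  have hQne : Q.Nonempty := by
    obtain ⟨v, hv⟩ : W.Nonempty := by
      rw [← Finset.card_pos, hWm]; omega
    have hdegx : t.degree (↑(f v) : B) = 1 := (f v).2
    have hpos : 0 < t.degree (↑(f v) : B) := by omega
    rw [← SimpleGraph.card_neighborFinset_eq_degree, Finset.card_pos] at hpos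
    obtain ⟨y₀, hy₀⟩ := hpos
    have hadj : t.Adj (↑(f v) : B) y₀ := (SimpleGraph.mem_neighborFinset _ _ _).mp hy₀
    have hs := hsum _ y₀ hadj
    rcases le_or_gt m (3 * g (↑(f v) : B) y₀) with h | h
    · exact ⟨((↑(f v) : B), y₀), Finset.mem_filter.mpr ⟨Finset.mem_univ _, hadj, h⟩⟩
    · refine ⟨(y₀, (↑(f v) : B)), Finset.mem_filter.mpr ⟨Finset.mem_univ _, hadj.symm, ?_⟩⟩
      show m ≤ 3 * g y₀ (↑(f v) : B)
      omega
  obtain ⟨p, hpQ, hpmin⟩ := Finset.exists_min_image Q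
    (fun p => g p.1 p.2 * (Fintype.card B + 1) + bc p.1 p.2) hQne
  obtain ⟨x, y⟩ := p
  obtain ⟨-, hadj, hgood⟩ := Finset.mem_filter.mp hpQ
  have hclaim : m ≤ 3 * g y x := by
    by_contra hcon
    push_neg at hcon
    have hbig : 2 * m < 3 * g x y := by
      have := hsum x y hadj
      omega
    rcases hdeg13 x with hdx | hdx
    · have hle : g x y ≤ 1 := by
        simp only [hg]
        apply Finset.card_le_one.mpr
        intro a ha b hb
        have ha' := (Finset.mem_filter.mp ha).2
        have hb' := (Finset.mem_filter.mp hb).2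
        have h1 : (↑(f a) : B) = x := deg_one_side hadj hdx ha'
        have h2 : (↑(f b) : B) = x := deg_one_side hadj hdx hb'
        exact f.injective (Subtype.ext (h1.trans h2.symm))
      omega
    · have hy : y ∈ t.neighborFinset x := (SimpleGraph.mem_neighborFinset _ _ _).mpr hadj
      have hcard : ((t.neighborFinset x).erase y).card = 2 := by
        rw [Finset.card_erase_of_mem hy, SimpleGraph.card_neighborFinset_eq_degree, hdx]
      obtain ⟨z₁, z₂, hz12, hzset⟩ := Finset.card_eq_two.mp hcard
      have hz₁ : z₁ ∈ (t.neighborFinset x).erase y := by rw [hzset]; simp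
      have hz₂ : z₂ ∈ (t.neighborFinset x).erase y := by rw [hzset]; simp
      have hz₁y : z₁ ≠ y := (Finset.mem_erase.mp hz₁).1
      have hz₂y : z₂ ≠ y := (Finset.mem_erase.mp hz₂).1
      have hz₁a : t.Adj x z₁ :=
        (SimpleGraph.mem_neighborFinset _ _ _).mp (Finset.mem_erase.mp hz₁).2
      have hz₂a : t.Adj x z₂ :=
        (SimpleGraph.mem_neighborFinset _ _ _).mp (Finset.mem_erase.mp hz₂).2
      have hcover : g x y ≤ g z₁ x + g z₂ x := by
        simp only [hg]
        have hsub : (W.filter fun v => (t.deleteEdges {s(x, y)}).Reachable (↑(f v)) x) ⊆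
            (W.filter fun v => (t.deleteEdges {s(z₁, x)}).Reachable (↑(f v)) z₁) ∪
            (W.filter fun v => (t.deleteEdges {s(z₂, x)}).Reachable (↑(f v)) z₂) := by
          intro v hv
          obtain ⟨hvW, hvr⟩ := Finset.mem_filter.mp hv
          have hfvx : (↑(f v) : B) ≠ x := by
            intro h
            have h2 := (f v).2
            rw [h, hdx] at h2
            omega
          obtain ⟨z, hza, hzy, hzr⟩ := step_off hadj hvr hfvx
          have hzmem : z ∈ (t.neighborFinset x).erase y :=
            Finset.mem_erase.mpr ⟨hzy, (SimpleGraph.mem_neighborFinset _ _ _).mpr hza⟩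
          rw [hzset] at hzmem
          rcases Finset.mem_insert.mp hzmem with rfl | hzmem
          · apply Finset.mem_union_left
            apply Finset.mem_filter.mpr ⟨hvW, ?_⟩
            rwa [Sym2.eq_swap]
          · rw [Finset.mem_singleton.mp hzmem] at hzr
            apply Finset.mem_union_right
            apply Finset.mem_filter.mpr ⟨hvW, ?_⟩
            rwa [Sym2.eq_swap]
        exact (Finset.card_le_card hsub).trans (Finset.card_union_le _ _)
      have hheavy : m < 3 * g z₁ x ∨ m < 3 * g z₂ x := by omega
      have hstep : ∀ z : B, t.Adj x z → z ≠ y → m < 3 * g z x → False := by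
        intro z hza hzy hzheavy
        have hzQ : (z, x) ∈ Q :=
          Finset.mem_filter.mpr ⟨Finset.mem_univ _, hza.symm, le_of_lt hzheavy⟩
        have hmin : g x y * (Fintype.card B + 1) + bc x y ≤
            g z x * (Fintype.card B + 1) + bc z x := hpmin (z, x) hzQ
        have hmono : ∀ a : B, (t.deleteEdges {s(z, x)}).Reachable a z →
            (t.deleteEdges {s(x, y)}).Reachable a x ∧ a ≠ x := by
          intro a ha
          rw [Sym2.eq_swap] at ha
          exact side_mono ht.IsAcyclic hadj hza hzy ha
        have hgle : g z x ≤ g x y := by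
          simp only [hg]
          apply Finset.card_le_card
          intro v hv
          obtain ⟨hvW, hvr⟩ := Finset.mem_filter.mp hv
          exact Finset.mem_filter.mpr ⟨hvW, (hmono _ hvr).1⟩
        have hblt : bc z x < bc x y := by
          simp only [hbc]
          apply Finset.card_lt_card
          have hsub : (Finset.univ.filter
              fun b : B => (t.deleteEdges {s(z, x)}).Reachable b z) ⊆
              (Finset.univ.filter fun b : B => (t.deleteEdges {s(x, y)}).Reachable b x) := by
            intro a ha
            exact Finset.mem_filter.mpr
              ⟨Finset.mem_univ _, (hmono a (Finset.mem_filter.mp ha).2).1⟩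
          refine (Finset.ssubset_iff_of_subset hsub).mpr ⟨x, ?_, ?_⟩
          · exact Finset.mem_filter.mpr ⟨Finset.mem_univ _, SimpleGraph.Reachable.refl _⟩
          · intro hmem
            exact absurd rfl (hmono x (Finset.mem_filter.mp hmem).2).2
        have hbbound : bc z x ≤ Fintype.card B := by
          simp only [hbc]
          exact (Finset.card_filter_le _ _).trans (by simp)
        have hcontra : g z x * (Fintype.card B + 1) + bc z x <
            g x y * (Fintype.card B + 1) + bc x y := by
          rcases lt_or_eq_of_le hgle with hlt | heq
          · calc g z x * (Fintype.card B + 1) + bc z x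
                < g z x * (Fintype.card B + 1) + (Fintype.card B + 1) := by omega
              _ = (g z x + 1) * (Fintype.card B + 1) := by ring
              _ ≤ g x y * (Fintype.card B + 1) :=
                Nat.mul_le_mul_right _ (Nat.succ_le_of_lt hlt)
              _ ≤ g x y * (Fintype.card B + 1) + bc x y := Nat.le_add_right _ _
          · rw [heq]
            omega
        omega
      rcases hheavy with h | h
      · exact hstep z₁ hz₁a hz₁y h
      · exact hstep z₂ hz₂a hz₂y h
  refine ⟨x, y, hadj, hgood, ?_⟩
  rw [← hswap x y]
  exact hclaim

/-- Let `G` be a graph on `n` vertices, `T ⊆ G` a tree with vertex set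
`W`, `|W| = m`, such that every partition `(W₁, W₂)` of `W` with `|W₁|, |W₂| ≥ m/3` has at
least `c·n` crossing edges in `G`.  If `X` is a set of vertices touching at most `c·n/2`
edges of `G` and every vertex outside `X` has degree at most `M`, then the rank-width of
`G` is at least `c·n/(2M²)`. -/
theorem stmt13 {V : Type} [Fintype V] (G : SimpleGraph V) [DecidableRel G.Adj]
    (W : Finset V) (m : ℕ) (hWm : W.card = m)
    (htree : ∃ T : SimpleGraph V, T ≤ G ∧ T.support = ↑W ∧
      (T.induce (↑W : Set V)).IsTree)
    (c : ℝ)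
    (hbis : ∀ W₁ W₂ : Finset V, W₁ ∪ W₂ = W → Disjoint W₁ W₂ →
      m ≤ 3 * W₁.card → m ≤ 3 * W₂.card →
      c * Fintype.card V ≤
        ({e ∈ G.edgeSet | ∃ a ∈ W₁, ∃ b ∈ W₂, e = s(a, b)}.ncard : ℝ))
    (X : Finset V)
    (hX : ({e ∈ G.edgeSet | ∃ x ∈ X, x ∈ e}.ncard : ℝ) ≤ c * Fintype.card V / 2)
    (M : ℕ) (hdeg : ∀ v : V, v ∉ X → G.degree v ≤ M)
    (k : ℕ) (hk : HasRankwidthAtMost G k) :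
    c * Fintype.card V / (2 * M ^ 2) ≤ (k : ℝ) := by
  have hk0 : (0 : ℝ) ≤ (k : ℝ) := Nat.cast_nonneg k
  rcases Nat.lt_or_ge m 2 with hm | hm
  · rcases (by omega : m = 0 ∨ m = 1) with rfl | rfl
    · -- m = 0 : the bisection hypothesis applied to the empty partition forces c·n ≤ 0
      have hW : W = ∅ := Finset.card_eq_zero.mp hWm
      have h0 := hbis ∅ ∅ (by simp [hW]) (by simp) (by simp) (by simp)
      have hempty : {e ∈ G.edgeSet | ∃ a ∈ (∅ : Finset V), ∃ b ∈ (∅ : Finset V), e = s(a, b)}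
          = (∅ : Set (Sym2 V)) := by
        ext e; simp
      rw [hempty] at h0
      simp only [Set.ncard_empty, Nat.cast_zero] at h0
      have hle : c * Fintype.card V / (2 * M ^ 2) ≤ 0 :=
        div_nonpos_of_nonpos_of_nonneg h0 (by positivity)
      linarith
    · -- m = 1 is impossible : the support of a graph cannot be a single vertex
      exfalso
      obtain ⟨T, hTG, hTsupp, hTtree⟩ := htree
      obtain ⟨w, hw⟩ := Finset.card_eq_one.mp hWm
      have hwsupp : w ∈ T.support := by
        rw [hTsupp, hw]; simp
      obtain ⟨u, hu⟩ := (SimpleGraph.mem_support T).mp hwsupp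
      have husupp : u ∈ T.support := (SimpleGraph.mem_support T).mpr ⟨w, hu.symm⟩
      rw [hTsupp, hw] at husupp
      simp only [Finset.coe_singleton, Set.mem_singleton_iff] at husupp
      subst husupp
      exact hu.ne rfl
  · -- main case : m ≥ 2
    obtain ⟨B, _, t, ht, hdeg13, f, hcut⟩ := hk
    obtain ⟨x, y, hadj, hc1, hc2⟩ := exists_balanced_edge t ht hdeg13 f W m hWm hm
    set A : Set V := {v : V | (t.deleteEdges {s(x, y)}).Reachable (↑(f v)) x} with hA
    have hcutk : cutRank G A ≤ k := hcut x y hadj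
    set W₁ : Finset V :=
      W.filter (fun v => (t.deleteEdges {s(x, y)}).Reachable (↑(f v)) x) with hW₁
    set W₂ : Finset V :=
      W.filter (fun v => (t.deleteEdges {s(x, y)}).Reachable (↑(f v)) y) with hW₂
    have hunion : W₁ ∪ W₂ = W := by
      apply Finset.Subset.antisymm
      · exact Finset.union_subset (Finset.filter_subset _ _) (Finset.filter_subset _ _)
      · intro v hv
        rcases reach_or (t := t) ht.isConnected (x := x) (y := y) (↑(f v) : B) with h | h
        · exact Finset.mem_union_left _ (Finset.mem_filter.mpr ⟨hv, h⟩)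
        · exact Finset.mem_union_right _ (Finset.mem_filter.mpr ⟨hv, h⟩)
    have hdisj : Disjoint W₁ W₂ := by
      rw [Finset.disjoint_left]
      intro v h1 h2
      exact not_both ht.IsAcyclic hadj (Finset.mem_filter.mp h1).2 (Finset.mem_filter.mp h2).2
    have hE1 := hbis W₁ W₂ hunion hdisj hc1 hc2
    set E₁ : Set (Sym2 V) := {e ∈ G.edgeSet | ∃ a ∈ W₁, ∃ b ∈ W₂, e = s(a, b)} with hE₁
    set E₂ : Set (Sym2 V) := {e ∈ G.edgeSet | ∃ x ∈ X, x ∈ e} with hE₂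
    set P : Finset (V × V) := Finset.univ.filter
      (fun p : V × V => p.1 ∈ W₁ ∧ p.2 ∈ W₂ ∧ G.Adj p.1 p.2 ∧ p.1 ∉ X ∧ p.2 ∉ X) with hP
    have hPsub : E₁ \ E₂ ⊆ ↑(P.image fun p : V × V => s(p.1, p.2)) := by
      rintro e ⟨he1, he2⟩
      obtain ⟨heE, a, haW, b, hbW, rfl⟩ := he1
      have hadj' : G.Adj a b := heE
      have haX : a ∉ X := fun h => he2 ⟨heE, a, h, by simp⟩
      have hbX : b ∉ X := fun h => he2 ⟨heE, b, h, by simp⟩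
      simp only [Finset.coe_image, Set.mem_image, Finset.mem_coe]
      exact ⟨(a, b), Finset.mem_filter.mpr ⟨Finset.mem_univ _, haW, hbW, hadj', haX, hbX⟩, rfl⟩
    have hcount1 : (E₁ \ E₂).ncard ≤ P.card := by
      calc (E₁ \ E₂).ncard
          ≤ (↑(P.image fun p : V × V => s(p.1, p.2)) : Set (Sym2 V)).ncard :=
            Set.ncard_le_ncard hPsub (Set.toFinite _)
        _ = (P.image fun p : V × V => s(p.1, p.2)).card := Set.ncard_coe_finset _
        _ ≤ P.card := Finset.card_image_le
    -- the adjacency matrix across the cut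
    set N : Matrix ↥A ↥(Aᶜ) (ZMod 2) :=
      fun u v => if G.Adj u.1 v.1 then 1 else 0 with hN
    set R : Finset ↥A := Finset.univ.filter (fun u : ↥A => u.1 ∉ X) with hR
    set C : Finset ↥(Aᶜ) := Finset.univ.filter (fun v : ↥(Aᶜ) => v.1 ∉ X) with hC
    have hNadj : ∀ (u : ↥A) (v : ↥(Aᶜ)), N u v ≠ 0 ↔ G.Adj u.1 v.1 := by
      intro u v
      simp only [hN]
      constructor
      · intro h
        by_contra hna
        exact h (if_neg hna)
      · intro h
        rw [if_pos h]
        exact one_ne_zero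
    have hrow : ∀ u ∈ R, (C.filter fun v => N u v ≠ 0).card ≤ M := by
      intro u hu
      have huX : u.1 ∉ X := (Finset.mem_filter.mp hu).2
      calc (C.filter fun v => N u v ≠ 0).card
          ≤ (G.neighborFinset u.1).card := by
            apply Finset.card_le_card_of_injOn (fun v => v.1)
            · intro v hv
              exact (SimpleGraph.mem_neighborFinset _ _ _).mpr
                ((hNadj u v).mp (Finset.mem_filter.mp hv).2)
            · intro a _ b _ hab
              exact Subtype.ext hab
        _ = G.degree u.1 := SimpleGraph.card_neighborFinset_eq_degree _ _
        _ ≤ M := hdeg u.1 huX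
    have hcol : ∀ v ∈ C, (R.filter fun u => N u v ≠ 0).card ≤ M := by
      intro v hv
      have hvX : v.1 ∉ X := (Finset.mem_filter.mp hv).2
      calc (R.filter fun u => N u v ≠ 0).card
          ≤ (G.neighborFinset v.1).card := by
            apply Finset.card_le_card_of_injOn (fun u => u.1)
            · intro u hu
              exact (SimpleGraph.mem_neighborFinset _ _ _).mpr
                ((hNadj u v).mp (Finset.mem_filter.mp hu).2).symm
            · intro a _ b _ hab
              exact Subtype.ext hab
        _ = G.degree v.1 := SimpleGraph.card_neighborFinset_eq_degree _ _
        _ ≤ M := hdeg v.1 hvX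
    have hPmat : P.card ≤ ((R ×ˢ C).filter fun p => N p.1 p.2 ≠ 0).card := by
      apply Finset.card_le_card_of_surjOn (fun q : ↥A × ↥(Aᶜ) => ((q.1.1 : V), (q.2.1 : V)))
      intro p hp
      obtain ⟨-, h1, h2, h3, h4, h5⟩ := Finset.mem_filter.mp hp
      have hp1A : p.1 ∈ A := (Finset.mem_filter.mp h1).2
      have hp2A : p.2 ∈ Aᶜ := by
        intro hmem
        exact not_both ht.IsAcyclic hadj hmem (Finset.mem_filter.mp h2).2
      refine ⟨(⟨p.1, hp1A⟩, ⟨p.2, hp2A⟩), ?_, rfl⟩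
      apply Finset.mem_coe.mpr
      apply Finset.mem_filter.mpr
      refine ⟨Finset.mem_product.mpr ⟨?_, ?_⟩, ?_⟩
      · exact Finset.mem_filter.mpr ⟨Finset.mem_univ _, h4⟩
      · exact Finset.mem_filter.mpr ⟨Finset.mem_univ _, h5⟩
      · exact (hNadj _ _).mpr h3
    have hrk := nonzero_count_le_rank_mul_sq N R C M hrow hcol
    have hNrank : N.rank ≤ k := by
      have h := hcutk
      unfold cutRank at h
      convert h using 2
      rw [hN]
      have key : ∀ (i1 i2 : Fintype ↥(Aᶜ)) (N1 N2 : Matrix ↥A ↥(Aᶜ) (ZMod 2)), N1 = N2 →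
          @Matrix.rank _ _ _ i1 _ N1 = @Matrix.rank _ _ _ i2 _ N2 := by
        intro i1 i2 N1 N2 hN12
        subst hN12
        cases Subsingleton.elim i1 i2
        rfl
      apply key
      funext u v
      congr
    have hchain : (E₁ \ E₂).ncard ≤ k * M ^ 2 :=
      le_trans hcount1 (le_trans hPmat (le_trans hrk (Nat.mul_le_mul_right _ hNrank)))
    have hsplit : E₁.ncard ≤ (E₁ \ E₂).ncard + E₂.ncard := by
      calc E₁.ncard ≤ ((E₁ \ E₂) ∪ E₂).ncard := by
            apply Set.ncard_le_ncard ?_ (Set.toFinite _)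
            intro e he
            by_cases h : e ∈ E₂
            · exact Or.inr h
            · exact Or.inl ⟨he, h⟩
        _ ≤ (E₁ \ E₂).ncard + E₂.ncard := Set.ncard_union_le _ _
    have hhalf : c * Fintype.card V / 2 ≤ ((E₁ \ E₂).ncard : ℝ) := by
      have hcast := (Nat.cast_le (α := ℝ)).mpr hsplit
      push_cast at hcast
      linarith
    have hfin2 : c * Fintype.card V / 2 ≤ (k : ℝ) * (M : ℝ) ^ 2 := by
      have hcast := (Nat.cast_le (α := ℝ)).mpr hchain
      push_cast at hcast
      linarith
    rcases Nat.eq_zero_or_pos M with rfl | hM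
    · simp only [Nat.cast_zero]
      norm_num
    · have hM2 : (0 : ℝ) < 2 * (M : ℝ) ^ 2 := by positivity
      rw [div_le_iff₀ hM2]
      nlinarith [hfin2]
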